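/- For every t₀ ∈ ℝ there exist a finite time t_max ∈ (t₀, ∞), a constant c_u > 0, and a twice continuously differentiable function u : [t₀, t_max) → ℝ such that u''(t) = 6·u(t)² + t for all t ∈ [t₀, t_max) and u(t)·(t_max − t)² → c_u as t → t_max⁻. In particular, the first Painlevé equation admits solutions that blow up in finite time with the type-I rate u(t) ∼ c_u·(t_max − t)^{−2}. -/

import Mathlib

open Real Set Filter Topology

/-- Laurent coefficients of the Painlevé I pole expansion at `a`:
`u(t) = (t-a)⁻² + ∑ n, pc a n * (t-a)^n`. -/
noncomputable def pc (a : ℝ) : ℕ → ℝ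
  | 0 => 0
  | 1 => 0
  | 2 => -a / 10
  | 3 => -1 / 6
  | 4 => 0
  | n + 5 => 6 / (((n : ℝ) + 5) * ((n : ℝ) + 4) - 12) *
      ∑ k ∈ (Finset.range (n + 4)).attach, pc a k.1 * pc a (n + 3 - k.1)
  decreasing_by
  · have := Finset.mem_range.mp k.2; omega
  · omega

/-- Coefficients of the derivative series. -/
noncomputable def pc1 (a : ℝ) (n : ℕ) : ℝ := ((n : ℝ) + 1) * pc a (n + 1)

/-- Coefficients of the second derivative series. -/
noncomputable def pc2 (a : ℝ) (n : ℕ) : ℝ := ((n : ℝ) + 1) * pc1 a (n + 1)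

lemma pc_succ (a : ℝ) (n : ℕ) : pc a (n+5) = 6 / (((n : ℝ) + 5) * ((n : ℝ) + 4) - 12) *
      ∑ k ∈ Finset.range (n + 4), pc a k * pc a (n + 3 - k) := by
  rw [pc, Finset.sum_attach (Finset.range (n+4)) (fun k => pc a k * pc a (n + 3 - k))]

lemma pc_bound (a R : ℝ) (hR2 : 2 ≤ R) (ha : |a| / 10 ≤ R ^ 2) :
    ∀ n, |pc a n| ≤ R ^ n := by
  have hR0 : (0:ℝ) < R := by linarith
  intro n
  induction n using Nat.strong_induction_on with
  | _ n ih =>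
    match n with
    | 0 => simp [pc]
    | 1 => simp [pc]; linarith
    | 2 => rw [show pc a 2 = -a/10 from by rw [pc]]
           rw [abs_div, abs_neg]; simpa using ha
    | 3 => rw [show pc a 3 = -1/6 from by rw [pc]]
           rw [abs_div, abs_neg]
           have : (8:ℝ) ≤ R ^ 3 := by nlinarith
           rw [abs_one, abs_of_pos (by norm_num : (0:ℝ) < 6)]
           linarith
    | 4 => rw [show pc a 4 = 0 from by rw [pc], abs_zero]; positivity
    | (m + 5) =>
      rw [pc_succ]
      set D : ℝ := ((m : ℝ) + 5) * ((m : ℝ) + 4) - 12 with hD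
      have hDpos : (8:ℝ) ≤ D := by
        have : (0:ℝ) ≤ (m:ℝ) := Nat.cast_nonneg m
        nlinarith
      have hsum : |∑ k ∈ Finset.range (m + 4), pc a k * pc a (m + 3 - k)|
          ≤ ((m:ℝ) + 4) * R ^ (m + 3) := by
        calc |∑ k ∈ Finset.range (m + 4), pc a k * pc a (m + 3 - k)|
            ≤ ∑ k ∈ Finset.range (m + 4), |pc a k * pc a (m + 3 - k)| :=
              Finset.abs_sum_le_sum_abs _ _
          _ ≤ ∑ k ∈ Finset.range (m + 4), R ^ (m + 3) := by
              apply Finset.sum_le_sum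
              intro k hk
              have hk' : k < m + 4 := Finset.mem_range.mp hk
              rw [abs_mul]
              have h1 : |pc a k| ≤ R ^ k := ih k (by omega)
              have h2 : |pc a (m + 3 - k)| ≤ R ^ (m + 3 - k) := ih (m+3-k) (by omega)
              calc |pc a k| * |pc a (m + 3 - k)| ≤ R ^ k * R ^ (m + 3 - k) := by
                    apply mul_le_mul h1 h2 (abs_nonneg _) (by positivity)
                _ = R ^ (m + 3) := by rw [← pow_add]; congr 1; omega
          _ = ((m:ℝ) + 4) * R ^ (m + 3) := by
              rw [Finset.sum_const, Finset.card_range]; push_cast; ring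
      rw [abs_mul]
      have h6 : |6 / D| = 6 / D := abs_of_pos (by positivity)
      rw [h6]
      calc 6 / D * |∑ k ∈ Finset.range (m + 4), pc a k * pc a (m + 3 - k)|
          ≤ 6 / D * (((m:ℝ) + 4) * R ^ (m + 3)) := by
            apply mul_le_mul_of_nonneg_left hsum (by positivity)
        _ ≤ R ^ (m + 5) := by
            rw [div_mul_eq_mul_div, div_le_iff₀ (by linarith)]
            have hRp : (0:ℝ) < R ^ (m+3) := by positivity
            have hR4 : (4:ℝ) ≤ R ^ 2 := by nlinarith
            have key : 6 * ((m:ℝ) + 4) ≤ R ^ 2 * D := by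
              have : (0:ℝ) ≤ (m:ℝ) := Nat.cast_nonneg m
              nlinarith
            calc 6 * (((m:ℝ) + 4) * R ^ (m + 3)) = (6 * ((m:ℝ)+4)) * R ^ (m+3) := by ring
              _ ≤ (R ^ 2 * D) * R ^ (m+3) := by
                  apply mul_le_mul_of_nonneg_right key hRp.le
              _ = R ^ (m + 5) * D := by rw [show m + 5 = 2 + (m+3) by omega, pow_add]; ring

/-- the inhomogeneous part -/
noncomputable def ee (a : ℝ) : ℕ → ℝ := fun m => if m = 0 then a else if m = 1 then 1 else 0

lemma pc_key (a : ℝ) (m : ℕ) :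
    ((m:ℝ) + 2) * ((m:ℝ) + 1) * pc a (m + 2)
      = 12 * pc a (m + 2) + 6 * (∑ k ∈ Finset.range (m + 1), pc a k * pc a (m - k)) + ee a m := by
  match m with
  | 0 => simp [pc, ee, Finset.sum_range_succ]; ring
  | 1 => simp [pc, ee, Finset.sum_range_succ]; norm_num
  | 2 => simp [pc, ee, Finset.sum_range_succ]
  | (k + 3) =>
    have h5 : k + 3 + 2 = k + 5 := by omega
    rw [h5, pc_succ]
    set D : ℝ := ((k : ℝ) + 5) * ((k : ℝ) + 4) - 12 with hD
    have hDpos : (8:ℝ) ≤ D := by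
      have : (0:ℝ) ≤ (k:ℝ) := Nat.cast_nonneg k
      nlinarith
    have hDne : D ≠ 0 := by linarith
    have hee : ee a (k+3) = 0 := by simp [ee]
    rw [hee]
    have hrange : k + 3 + 1 = k + 4 := by omega
    rw [hrange]
    set S : ℝ := ∑ k' ∈ Finset.range (k + 4), pc a k' * pc a (k + 3 - k') with hS
    push_cast
    field_simp
    ring

lemma aux_deriv (c : ℕ → ℝ) {r : ℝ} (hr : 0 < r)
    (h0 : Summable fun n => |c n| * r ^ n)
    (h1 : Summable fun n : ℕ => (n : ℝ) * |c n| * r ^ n) {x : ℝ} (hx : |x| < r) :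
    HasDerivAt (fun y : ℝ => ∑' n : ℕ, c n * y ^ n)
      (∑' n : ℕ, ((n : ℝ) + 1) * c (n + 1) * x ^ n) x := by
  have hball : x ∈ Metric.ball (0:ℝ) r := by
    rw [mem_ball_zero_iff, Real.norm_eq_abs]; exact hx
  set u : ℕ → ℝ := fun n => (n:ℝ) * |c n| * r ^ (n - 1) with hu
  have husum : Summable u := by
    rw [← summable_nat_add_iff 1]
    have : (fun n : ℕ => u (n + 1)) = fun n : ℕ => ((((n+1 : ℕ)):ℝ) * |c (n+1)| * r ^ (n+1)) / r := by
      funext n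
      simp only [hu]
      push_cast
      rw [pow_succ]
      field_simp
    rw [this]
    exact ((summable_nat_add_iff 1).mpr h1).div_const r
  have hbound : ∀ (n : ℕ) (y : ℝ), y ∈ Metric.ball (0:ℝ) r →
      ‖c n * ((n:ℝ) * y ^ (n - 1))‖ ≤ u n := by
    intro n y hy
    have hy' : |y| ≤ r := by
      have := mem_ball_zero_iff.mp hy
      simpa [Real.norm_eq_abs] using this.le
    rw [Real.norm_eq_abs, abs_mul, abs_mul, abs_pow, Nat.abs_cast]
    calc |c n| * ((n:ℝ) * |y| ^ (n-1)) ≤ |c n| * ((n:ℝ) * r ^ (n-1)) := by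
          apply mul_le_mul_of_nonneg_left _ (abs_nonneg _)
          apply mul_le_mul_of_nonneg_left _ (Nat.cast_nonneg n)
          exact pow_le_pow_left₀ (abs_nonneg y) hy' _
      _ = u n := by simp only [hu]; ring
  have hsum_at : ∀ y : ℝ, y ∈ Metric.ball (0:ℝ) r → Summable fun n => c n * y ^ n := by
    intro y hy
    have hy' : |y| ≤ r := by
      have := mem_ball_zero_iff.mp hy
      simpa [Real.norm_eq_abs] using this.le
    apply Summable.of_norm_bounded h0
    intro n
    rw [Real.norm_eq_abs, abs_mul, abs_pow]
    exact mul_le_mul_of_nonneg_left (pow_le_pow_left₀ (abs_nonneg y) hy' _) (abs_nonneg _)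
  have hUnif : TendstoUniformlyOn
      (fun N y => ∑ n ∈ Finset.range N, c n * ((n:ℝ) * y ^ (n - 1)))
      (fun y => ∑' n : ℕ, c n * ((n:ℝ) * y ^ (n - 1))) atTop (Metric.ball (0:ℝ) r) :=
    tendstoUniformlyOn_tsum_nat husum hbound
  have hder : HasDerivAt (fun y : ℝ => ∑' n : ℕ, c n * y ^ n)
      (∑' n : ℕ, c n * ((n:ℝ) * x ^ (n - 1))) x := by
    apply hasDerivAt_of_tendstoUniformlyOn
      (f := fun (N : ℕ) (y : ℝ) => ∑ n ∈ Finset.range N, c n * y ^ n)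
      Metric.isOpen_ball hUnif ?_ ?_ hball
    · filter_upwards with N y hy
      exact HasDerivAt.fun_sum fun n _ => (hasDerivAt_pow n y).const_mul (c n)
    · intro y hy
      exact (hsum_at y hy).hasSum.tendsto_sum_nat
  have heq : (∑' n : ℕ, c n * ((n:ℝ) * x ^ (n - 1)))
      = ∑' n : ℕ, ((n : ℝ) + 1) * c (n + 1) * x ^ n := by
    have hs : Summable fun n => c n * ((n:ℝ) * x ^ (n - 1)) :=
      Summable.of_norm_bounded husum (fun n => hbound n x hball)
    rw [Summable.tsum_eq_zero_add hs]
    simp only [Nat.cast_zero, zero_mul, mul_zero, zero_add]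
    apply tsum_congr
    intro n
    push_cast
    ring
  rwa [heq] at hder

set_option maxHeartbeats 1000000 in
theorem painleve_blowup_exists :
    ∀ t₀ : ℝ, ∃ tmax : ℝ, t₀ < tmax ∧ ∃ c_u : ℝ, 0 < c_u ∧
      ∃ u du : ℝ → ℝ,
        (∀ t ∈ Ico t₀ tmax, HasDerivWithinAt u (du t) (Ico t₀ tmax) t) ∧
        (∀ t ∈ Ico t₀ tmax,
          HasDerivWithinAt du (6 * u t ^ 2 + t) (Ico t₀ tmax) t) ∧
        Tendsto (fun t => u t * (tmax - t) ^ 2) (𝓝[<] tmax) (𝓝 c_u) := by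
  intro t₀
  set R : ℝ := Real.sqrt (|t₀| + 1) + 2 with hRdef
  have hsq : Real.sqrt (|t₀| + 1) ^ 2 = |t₀| + 1 := Real.sq_sqrt (by positivity)
  have hR2 : 2 ≤ R := le_add_of_nonneg_left (Real.sqrt_nonneg _)
  have hR0 : 0 < R := by linarith
  set a : ℝ := t₀ + 1 / (2 * R) with hadef
  have hδ0 : 0 < 1 / (2 * R) := by positivity
  have ht₀a : t₀ < a := by rw [hadef]; linarith
  have hδ1 : 1 / (2 * R) ≤ 1 := by
    rw [div_le_one (by linarith)]; linarith
  have haR : |a| / 10 ≤ R ^ 2 := by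
    have h1 : |a| ≤ |t₀| + 1 := by
      calc |a| ≤ |t₀| + |1/(2*R)| := abs_add_le _ _
        _ ≤ |t₀| + 1 := by rw [abs_of_pos hδ0]; linarith
    have h2 : |t₀| + 1 ≤ R ^ 2 := by nlinarith [Real.sqrt_nonneg (|t₀| + 1)]
    linarith [abs_nonneg a]
  have hcb : ∀ n, |pc a n| ≤ R ^ n := pc_bound a R hR2 haR
  set r : ℝ := 3 / (4 * R) with hrdef
  have hr0 : 0 < r := by positivity
  clear_value R a r
  have hRr : ∀ n : ℕ, R ^ n * r ^ n = (3/4 : ℝ) ^ n := by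
    intro n
    rw [← mul_pow]
    congr 1
    rw [hrdef]
    field_simp
  -- geometric summability facts
  have hq : ‖(3/4 : ℝ)‖ < 1 := by
    rw [Real.norm_eq_abs, abs_of_pos (by norm_num : (0:ℝ) < 3/4)]
    norm_num
  have Sgeo : Summable fun n : ℕ => (3/4 : ℝ) ^ n :=
    summable_geometric_of_lt_one (by norm_num) (by norm_num)
  have Sg1 : Summable fun n : ℕ => (n : ℝ) * (3/4 : ℝ) ^ n := by
    have := summable_pow_mul_geometric_of_norm_lt_one 1 hq
    exact this.congr fun n => by rw [pow_one]
  have Sg2 : Summable fun n : ℕ => (n : ℝ) ^ 2 * (3/4 : ℝ) ^ n :=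
    summable_pow_mul_geometric_of_norm_lt_one 2 hq
  -- pointwise coefficient bounds
  have hple : ∀ n : ℕ, |pc a n| * r ^ n ≤ (3/4 : ℝ) ^ n := by
    intro n
    rw [← hRr n]
    exact mul_le_mul_of_nonneg_right (hcb n) (by positivity)
  have hple1 : ∀ n : ℕ, |pc1 a n| * r ^ n ≤ ((n:ℝ) + 1) * R * (3/4 : ℝ) ^ n := by
    intro n
    have : |pc1 a n| = ((n:ℝ) + 1) * |pc a (n+1)| := by
      rw [pc1, abs_mul, abs_of_nonneg (by positivity : (0:ℝ) ≤ (n:ℝ) + 1)]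
    rw [this]
    have h1 : |pc a (n+1)| * r ^ n ≤ R ^ (n+1) * r ^ n :=
      mul_le_mul_of_nonneg_right (hcb (n+1)) (by positivity)
    have h2 : R ^ (n+1) * r ^ n = R * (3/4:ℝ)^n := by
      rw [pow_succ]
      calc R ^ n * R * r ^ n = R * (R ^ n * r ^ n) := by ring
        _ = R * (3/4:ℝ)^n := by rw [hRr n]
    calc ((n:ℝ)+1) * |pc a (n+1)| * r ^ n = ((n:ℝ)+1) * (|pc a (n+1)| * r ^ n) := by ring
      _ ≤ ((n:ℝ)+1) * (R * (3/4:ℝ)^n) := by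
          apply mul_le_mul_of_nonneg_left _ (by positivity)
          rw [← h2]; exact h1
      _ = ((n:ℝ)+1) * R * (3/4:ℝ)^n := by ring
  -- the four summability hypotheses
  have hα : Summable fun n : ℕ => |pc a n| * r ^ n :=
    Summable.of_nonneg_of_le (fun n => by positivity) hple Sgeo
  have hβ : Summable fun n : ℕ => (n:ℝ) * |pc a n| * r ^ n := by
    apply Summable.of_nonneg_of_le (fun n => by positivity) _ Sg1
    intro n
    calc (n:ℝ) * |pc a n| * r ^ n = (n:ℝ) * (|pc a n| * r ^ n) := by ring
      _ ≤ (n:ℝ) * (3/4:ℝ)^n := mul_le_mul_of_nonneg_left (hple n) (Nat.cast_nonneg n)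
  have hγ : Summable fun n : ℕ => |pc1 a n| * r ^ n := by
    apply Summable.of_nonneg_of_le (fun n => by positivity) _ ((Sg1.add Sgeo).mul_left R)
    intro n
    calc |pc1 a n| * r ^ n ≤ ((n:ℝ)+1) * R * (3/4:ℝ)^n := hple1 n
      _ = R * ((n:ℝ) * (3/4:ℝ)^n + (3/4:ℝ)^n) := by ring
  have hδ' : Summable fun n : ℕ => (n:ℝ) * |pc1 a n| * r ^ n := by
    apply Summable.of_nonneg_of_le (fun n => by positivity) _ ((Sg2.add Sg1).mul_left R)
    intro n
    calc (n:ℝ) * |pc1 a n| * r ^ n = (n:ℝ) * (|pc1 a n| * r ^ n) := by ring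
      _ ≤ (n:ℝ) * (((n:ℝ)+1) * R * (3/4:ℝ)^n) :=
          mul_le_mul_of_nonneg_left (hple1 n) (Nat.cast_nonneg n)
      _ = R * ((n:ℝ)^2 * (3/4:ℝ)^n + (n:ℝ) * (3/4:ℝ)^n) := by ring
  have hc0 : pc a 0 = 0 := by rw [pc]
  have hc1 : pc a 1 = 0 := by rw [pc]
  -- the ODE identity from the coefficient recursion
  have hODE : ∀ x : ℝ, |x| < r → x ≠ 0 →
      (∑' n : ℕ, pc2 a n * x ^ n)
        = 12 * (x^2)⁻¹ * (∑' n : ℕ, pc a n * x ^ n)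
          + 6 * (∑' n : ℕ, pc a n * x ^ n) ^ 2 + a + x := by
    intro x hxr hx0
    have hxa : |x| ≤ r := hxr.le
    have hA : Summable fun n : ℕ => ‖pc a n * x ^ n‖ := by
      apply Summable.of_nonneg_of_le (fun n => norm_nonneg _) _ Sgeo
      intro n
      rw [Real.norm_eq_abs, abs_mul, abs_pow]
      calc |pc a n| * |x| ^ n ≤ |pc a n| * r ^ n :=
            mul_le_mul_of_nonneg_left (pow_le_pow_left₀ (abs_nonneg x) hxa n) (abs_nonneg _)
        _ ≤ (3/4:ℝ)^n := hple n
    have hS : Summable fun n : ℕ => pc a n * x ^ n := hA.of_norm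
    set S : ℝ := ∑' n : ℕ, pc a n * x ^ n with hSdef
    have hsum_eq : ∀ n : ℕ, ∑ k ∈ Finset.range (n+1), (pc a k * x ^ k) * (pc a (n-k) * x ^ (n-k))
        = (∑ k ∈ Finset.range (n+1), pc a k * pc a (n-k)) * x ^ n := by
      intro n
      rw [Finset.sum_mul]
      apply Finset.sum_congr rfl
      intro k hk
      have hk' : k < n + 1 := Finset.mem_range.mp hk
      calc (pc a k * x^k) * (pc a (n-k) * x^(n-k))
          = (pc a k * pc a (n-k)) * (x^k * x^(n-k)) := by ring
        _ = pc a k * pc a (n-k) * x ^ n := by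
            rw [← pow_add]
            congr 2
            omega
    have hprod : S * S = ∑' n : ℕ, (∑ k ∈ Finset.range (n+1), pc a k * pc a (n - k)) * x ^ n := by
      rw [hSdef, tsum_mul_tsum_eq_tsum_sum_range_of_summable_norm hA hA]
      exact tsum_congr fun n => hsum_eq n
    have hdnorm : Summable fun n : ℕ =>
        ‖(∑ k ∈ Finset.range (n+1), pc a k * pc a (n - k)) * x ^ n‖ := by
      have := summable_norm_sum_mul_range_of_summable_norm hA hA
      exact this.congr fun n => by rw [hsum_eq n]
    have hdsum : Summable fun n : ℕ =>
        (∑ k ∈ Finset.range (n+1), pc a k * pc a (n - k)) * x ^ n := hdnorm.of_norm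
    -- summabilities of the three pieces
    have hf12 : Summable fun n : ℕ => 12 * (pc a n * x ^ n) := hS.mul_left 12
    have SA : Summable fun n : ℕ => 12 * pc a (n+2) * x ^ (n+2) := by
      have := (summable_nat_add_iff 2).mpr hf12
      exact this.congr fun n => by ring
    have SB : Summable fun n : ℕ =>
        6 * (∑ k ∈ Finset.range (n+1), pc a k * pc a (n - k)) * x ^ (n+2) := by
      have := hdsum.mul_left (6 * x^2)
      exact this.congr fun n => by ring
    have SC : Summable fun n : ℕ => ee a n * x ^ (n+2) := by
      apply summable_of_ne_finset_zero (s := ({0,1} : Finset ℕ))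
      intro n hn
      simp only [Finset.mem_insert, Finset.mem_singleton] at hn
      push_neg at hn
      simp [ee, hn.1, hn.2]
    -- evaluate the three pieces
    have e1 : (∑' n : ℕ, 12 * pc a (n+2) * x ^ (n+2)) = 12 * S := by
      have hf1 : Summable fun n : ℕ => 12 * (pc a (n+1) * x ^ (n+1)) :=
        (summable_nat_add_iff 1).mpr hf12
      have h0' := Summable.tsum_eq_zero_add hf12
      have h1' := Summable.tsum_eq_zero_add hf1
      rw [hc0] at h0'
      rw [hc1] at h1'
      simp only [mul_zero, zero_mul, zero_add] at h0' h1'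
      have hterm : (∑' n : ℕ, 12 * (pc a n * x ^ n)) = 12 * S := tsum_mul_left
      rw [← hterm, h0', h1']
      exact tsum_congr fun n => by ring
    have e2 : (∑' n : ℕ, 6 * (∑ k ∈ Finset.range (n+1), pc a k * pc a (n - k)) * x ^ (n+2))
        = 6 * x^2 * S^2 := by
      rw [show S^2 = S * S from pow_two S, hprod, ← tsum_mul_left]
      exact tsum_congr fun n => by ring
    have e3 : (∑' n : ℕ, ee a n * x ^ (n+2)) = a * x^2 + x^3 := by
      rw [tsum_eq_sum (s := ({0,1} : Finset ℕ))]
      · rw [Finset.sum_pair (by norm_num : (0:ℕ) ≠ 1)]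
        norm_num [ee]
      · intro n hn
        simp only [Finset.mem_insert, Finset.mem_singleton] at hn
        push_neg at hn
        simp [ee, hn.1, hn.2]
    have hmain : x^2 * (∑' n : ℕ, pc2 a n * x ^ n)
        = 12 * S + 6 * x^2 * S^2 + (a * x^2 + x^3) := by
      calc x^2 * (∑' n : ℕ, pc2 a n * x ^ n)
          = ∑' n : ℕ, pc2 a n * x ^ (n+2) := by
            rw [← tsum_mul_left]
            exact tsum_congr fun n => by ring
        _ = ∑' n : ℕ, (12 * pc a (n+2) * x ^ (n+2)
              + (6 * (∑ k ∈ Finset.range (n+1), pc a k * pc a (n - k)) * x ^ (n+2)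
                + ee a n * x ^ (n+2))) := by
            apply tsum_congr
            intro n
            have hk := pc_key a n
            have hck : pc2 a n = ((n:ℝ)+2) * ((n:ℝ)+1) * pc a (n+2) := by
              rw [pc2, pc1]
              push_cast
              ring
            rw [hck, hk]
            ring
        _ = (∑' n : ℕ, 12 * pc a (n+2) * x ^ (n+2))
              + ((∑' n : ℕ, 6 * (∑ k ∈ Finset.range (n+1), pc a k * pc a (n - k)) * x ^ (n+2))
                + (∑' n : ℕ, ee a n * x ^ (n+2))) := by
            rw [Summable.tsum_add SA (SB.add SC), Summable.tsum_add SB SC]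
        _ = 12 * S + 6 * x^2 * S^2 + (a * x^2 + x^3) := by
            rw [e1, e2, e3]; ring
    have hx2 : x^2 ≠ 0 := pow_ne_zero 2 hx0
    have goal2 : x^2 * (∑' n : ℕ, pc2 a n * x ^ n)
        = x^2 * (12 * (x^2)⁻¹ * S + 6 * S^2 + a + x) := by
      rw [hmain]
      field_simp
      ring
    have := mul_left_cancel₀ hx2 goal2
    rw [hSdef] at this
    exact this
  -- facts for points in the interval
  have hfacts : ∀ t ∈ Ico t₀ a, t - a ≠ 0 ∧ |t - a| < r := by
    intro t ht
    obtain ⟨ht1, ht2⟩ := ht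
    constructor
    · intro h
      have : t = a := by linarith [sub_eq_zero.mp h]
      linarith
    · rw [abs_of_neg (by linarith : t - a < 0)]
      have h1 : -(t - a) = a - t := by ring
      rw [h1]
      have h2 : a - t ≤ 1 / (2 * R) := by rw [hadef]; linarith
      have h3 : 1 / (2 * R) < 3 / (4 * R) := by
        rw [div_lt_div_iff₀ (by linarith) (by linarith)]
        nlinarith
      rw [hrdef] at *
      linarith
  refine ⟨a, ht₀a, 1, one_pos,
    (fun t => ((t - a)^2)⁻¹ + ∑' n : ℕ, pc a n * (t - a)^n),
    (fun t => -(2*(t-a)) / ((t-a)^2)^2 + ∑' n : ℕ, pc1 a n * (t - a)^n), ?_, ?_, ?_⟩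
  · -- first derivative
    intro t ht
    obtain ⟨hta, hxr⟩ := hfacts t ht
    have hsub : HasDerivAt (fun s : ℝ => s - a) 1 t := (hasDerivAt_id t).sub_const a
    have hG : HasDerivAt (fun s : ℝ => ∑' n : ℕ, pc a n * (s - a)^n)
        (∑' n : ℕ, pc1 a n * (t - a)^n) t := by
      have h := (aux_deriv (pc a) hr0 hα hβ hxr).comp t hsub
      simp only [Function.comp_def, mul_one] at h
      have heq : (∑' n : ℕ, ((n:ℝ) + 1) * pc a (n + 1) * (t - a) ^ n)
          = ∑' n : ℕ, pc1 a n * (t - a)^n := by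
        exact tsum_congr fun n => by rw [pc1]
      rwa [heq] at h
    have hpow : HasDerivAt (fun s : ℝ => (s - a)^2) (2*(t-a)) t := by
      simpa using hsub.fun_pow 2
    have hI : HasDerivAt (fun s : ℝ => ((s - a)^2)⁻¹) (-(2*(t-a)) / ((t-a)^2)^2) t :=
      hpow.inv (pow_ne_zero 2 hta)
    exact (hI.add hG).hasDerivWithinAt
  · -- second derivative
    intro t ht
    obtain ⟨hta, hxr⟩ := hfacts t ht
    have hsub : HasDerivAt (fun s : ℝ => s - a) 1 t := (hasDerivAt_id t).sub_const a
    have hpow : HasDerivAt (fun s : ℝ => (s - a)^2) (2*(t-a)) t := by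
      simpa using hsub.fun_pow 2
    -- derivative of the rational part
    have hnum : HasDerivAt (fun s : ℝ => -(2*(s-a))) (-2) t := by
      have := (hsub.const_mul 2).fun_neg
      simpa using this
    have hden : HasDerivAt (fun s : ℝ => ((s-a)^2)^2) (2*((t-a)^2)*(2*(t-a))) t := by
      simpa using hpow.fun_pow 2
    have hdne : ((t-a)^2)^2 ≠ 0 := pow_ne_zero 2 (pow_ne_zero 2 hta)
    have hQ : HasDerivAt (fun s : ℝ => -(2*(s-a)) / ((s-a)^2)^2)
        (((-2) * ((t-a)^2)^2 - (-(2*(t-a))) * (2*((t-a)^2)*(2*(t-a)))) / (((t-a)^2)^2)^2) t :=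
      hnum.div hden hdne
    -- derivative of the series part
    have hG2 : HasDerivAt (fun s : ℝ => ∑' n : ℕ, pc1 a n * (s - a)^n)
        (∑' n : ℕ, pc2 a n * (t - a)^n) t := by
      have h := (aux_deriv (pc1 a) hr0 hγ hδ' hxr).comp t hsub
      simp only [Function.comp_def, mul_one] at h
      have heq : (∑' n : ℕ, ((n:ℝ) + 1) * pc1 a (n + 1) * (t - a) ^ n)
          = ∑' n : ℕ, pc2 a n * (t - a)^n := by
        exact tsum_congr fun n => by rw [pc2]
      rwa [heq] at h
    have htot := hQ.add hG2
    -- rewrite the value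
    have hODEx := hODE (t - a) hxr hta
    have hval : (((-2) * ((t-a)^2)^2 - (-(2*(t-a))) * (2*((t-a)^2)*(2*(t-a)))) / (((t-a)^2)^2)^2)
          + (∑' n : ℕ, pc2 a n * (t - a)^n)
        = 6 * ((((t - a)^2)⁻¹ + ∑' n : ℕ, pc a n * (t - a)^n)) ^ 2 + t := by
      have halg : ∀ (y S : ℝ), y ≠ 0 →
          ((-2) * (y^2)^2 - (-(2*y)) * (2*(y^2)*(2*y))) / ((y^2)^2)^2
            + (12 * (y^2)⁻¹ * S + 6 * S^2 + a + y)
          = 6 * ((y^2)⁻¹ + S) ^ 2 + (a + y) := by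
        intro y S hy
        have h2 : y^2 ≠ 0 := pow_ne_zero 2 hy
        field_simp
        ring
      rw [hODEx, halg (t-a) (∑' n : ℕ, pc a n * (t - a)^n) hta]
      ring
    rw [hval] at htot
    exact htot.hasDerivWithinAt
  · -- the limit
    have hcont : ContinuousAt (fun y : ℝ => ∑' n : ℕ, pc a n * y ^ n) 0 := by
      have := aux_deriv (pc a) hr0 hα hβ (x := 0) (by rw [abs_zero]; exact hr0)
      exact this.continuousAt
    have h1 : Tendsto (fun t : ℝ => t - a) (𝓝[<] a) (𝓝 0) := by
      have : Tendsto (fun t : ℝ => t - a) (𝓝 a) (𝓝 (a - a)) :=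
        (continuous_id.sub continuous_const).tendsto a
      rw [sub_self] at this
      exact this.mono_left nhdsWithin_le_nhds
    have h2 : Tendsto (fun t : ℝ => ∑' n : ℕ, pc a n * (t - a) ^ n) (𝓝[<] a)
        (𝓝 (∑' n : ℕ, pc a n * (0:ℝ) ^ n)) := hcont.tendsto.comp h1
    have h3 : Tendsto (fun t : ℝ => (a - t)^2) (𝓝[<] a) (𝓝 0) := by
      have : Tendsto (fun t : ℝ => (a - t)^2) (𝓝 a) (𝓝 ((a - a)^2)) :=
        ((continuous_const.sub continuous_id).pow 2).tendsto a
      rw [sub_self] at this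
      norm_num at this
      exact this.mono_left nhdsWithin_le_nhds
    have h4 : Tendsto (fun t : ℝ =>
        1 + (∑' n : ℕ, pc a n * (t - a) ^ n) * (a - t)^2) (𝓝[<] a) (𝓝 1) := by
      have := tendsto_const_nhds (x := (1:ℝ)) (f := 𝓝[<] a) |>.add (h2.mul h3)
      simpa using this
    apply h4.congr'
    filter_upwards [self_mem_nhdsWithin] with t ht
    have hta : t - a ≠ 0 := by
      intro h
      have : t = a := by linarith [sub_eq_zero.mp h]
      exact absurd this (ne_of_lt ht)
    have hsq2 : (a - t)^2 = (t - a)^2 := by ring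
    rw [hsq2]
    rw [add_mul, inv_mul_cancel₀ (pow_ne_zero 2 hta)]
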